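/- Let G be a finite metabelian group, N a normal subgroup of G, and B an abelian subgroup of N of maximal order among abelian subgroups of N. Then there exists a normal abelian subgroup C of G with C contained in the normal closure of B in G (hence C ≤ N) and |C| = |B|. -/

import Mathlib

open Subgroup
open scoped commutatorElement

section GillamAux

variable {G : Type*} [Group G]

/-- A subgroup containing another of no smaller cardinality equals it (finite case). -/
private lemma sub_eq_of_le_of_card_le [Finite G] {H K : Subgroup G} (h : H ≤ K)
    (hc : Nat.card K ≤ Nat.card H) : H = K := by
  have h1 : Nat.card (H : Set G) = (H : Set G).ncard := Nat.card_coe_set_eq _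
  have h2 : Nat.card (K : Set G) = (K : Set G).ncard := Nat.card_coe_set_eq _
  have : (H : Set G) = (K : Set G) := by
    refine Set.eq_of_subset_of_ncard_le h ?_ (Set.toFinite _)
    rw [← h1, ← h2]; exact hc
  exact SetLike.coe_injective this

/-- Elements of the closure of a pairwise-commuting set commute. -/
private lemma closure_comm {s : Set G} (h : ∀ x ∈ s, ∀ y ∈ s, Commute x y) :
    ∀ x ∈ closure s, ∀ y ∈ closure s, Commute x y := by
  have step1 : ∀ y ∈ s, ∀ x ∈ closure s, Commute y x := by
    intro y hy x hx
    have hle : closure s ≤ centralizer {y} := by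
      apply closure_le _ |>.mpr
      intro z hz
      rw [SetLike.mem_coe, mem_centralizer_iff]
      intro w hw
      rcases hw with rfl
      exact (h _ hy _ hz)
    have := hle hx
    rw [mem_centralizer_iff] at this
    exact (this y rfl)
  intro x hx y hy
  have hle : closure s ≤ centralizer {x} := by
    apply closure_le _ |>.mpr
    intro z hz
    rw [SetLike.mem_coe, mem_centralizer_iff]
    intro w hw
    rcases hw with rfl
    exact (step1 z hz w hx).symm
  have := hle hy
  rw [mem_centralizer_iff] at this
  exact (this x rfl)

/-- Cardinality formula for the join of two elementwise-commuting subgroups. -/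
private lemma card_sup_mul_card_inf_comm [Finite G] (H K : Subgroup G)
    (hc : ∀ x ∈ H, ∀ y ∈ K, x * y = y * x) :
    Nat.card (H ⊔ K : Subgroup G) * Nat.card (H ⊓ K : Subgroup G)
      = Nat.card H * Nat.card K := by
  classical
  let φ : (↥H × ↥K) →* G :=
    { toFun := fun p => (p.1 : G) * (p.2 : G)
      map_one' := by simp
      map_mul' := by
        rintro ⟨h, k⟩ ⟨h', k'⟩
        simp only [Prod.mk_mul_mk, Subgroup.coe_mul]
        have hcomm : (k : G) * (h' : G) = (h' : G) * (k : G) := (hc h'.1 h'.2 k.1 k.2).symm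
        calc (h : G) * h' * (k * k') = (h : G) * (h' * k) * k' := by group
          _ = (h : G) * (k * h') * k' := by rw [← hcomm]
          _ = (h : G) * k * (h' * k') := by group }
  have hrange : φ.range = H ⊔ K := by
    apply le_antisymm
    · rintro x ⟨⟨h, k⟩, rfl⟩
      exact mul_mem (le_sup_left (a := H) (b := K) h.2) (le_sup_right (a := H) (b := K) k.2)
    · refine sup_le ?_ ?_
      · intro x hx; exact ⟨(⟨⟨x, hx⟩, 1⟩ : ↥H × ↥K), by simp [φ]⟩
      · intro x hx; exact ⟨(⟨1, ⟨x, hx⟩⟩ : ↥H × ↥K), by simp [φ]⟩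
  have hker : Nat.card φ.ker = Nat.card (H ⊓ K : Subgroup G) := by
    apply Nat.card_congr
    refine ⟨fun p => ⟨(p.1.1 : G), Subgroup.mem_inf.mpr ⟨p.1.1.2, ?_⟩⟩, fun x =>
      ⟨⟨⟨(x : G), (Subgroup.mem_inf.mp x.2).1⟩, ⟨(x : G)⁻¹, inv_mem (Subgroup.mem_inf.mp x.2).2⟩⟩, ?_⟩, ?_, ?_⟩
    · have hp : ((p.1.1 : G) * (p.1.2 : G)) = 1 := p.2
      have : (p.1.1 : G) = (p.1.2 : G)⁻¹ := eq_inv_of_mul_eq_one_left hp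
      rw [this]; exact inv_mem p.1.2.2
    · show ((x : G) * (x : G)⁻¹) = 1
      group
    · rintro ⟨⟨h, k⟩, hp⟩
      have hp' : ((h : G) * (k : G)) = 1 := hp
      have : (k : G) = (h : G)⁻¹ := eq_inv_of_mul_eq_one_right hp'
      ext <;> simp [this]
    · intro x; rfl
  have hcard : Nat.card (↥H × ↥K) = Nat.card φ.range * Nat.card φ.ker := by
    have h1 := Subgroup.card_eq_card_quotient_mul_card_subgroup (φ.ker)
    have h2 : Nat.card ((↥H × ↥K) ⧸ φ.ker) = Nat.card φ.range :=
      Nat.card_congr (QuotientGroup.quotientKerEquivRange φ).toEquiv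
    rw [h1, h2]
  have := hcard
  rw [Nat.card_prod, hrange, hker] at this
  omega

/-- Cardinality formula for the join with a normal subgroup. -/
private lemma card_sup_mul_card_inf_normal [Finite G] (H N : Subgroup G) (hN : N.Normal) :
    Nat.card (H ⊔ N : Subgroup G) * Nat.card (H ⊓ N : Subgroup G)
      = Nat.card H * Nat.card N := by
  haveI := hN
  have e1 : Nat.card (H ⊔ N : Subgroup G)
      = Nat.card (↥(H ⊔ N) ⧸ N.subgroupOf (H ⊔ N)) * Nat.card (N.subgroupOf (H ⊔ N)) :=
    Subgroup.card_eq_card_quotient_mul_card_subgroup _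
  have e2 : Nat.card H
      = Nat.card (↥H ⧸ N.subgroupOf H) * Nat.card (N.subgroupOf H) :=
    Subgroup.card_eq_card_quotient_mul_card_subgroup _
  have e3 : Nat.card (↥H ⧸ N.subgroupOf H)
      = Nat.card (↥(H ⊔ N) ⧸ N.subgroupOf (H ⊔ N)) :=
    Nat.card_congr (QuotientGroup.quotientInfEquivProdNormalQuotient H N).toEquiv
  have e4 : Nat.card (N.subgroupOf (H ⊔ N)) = Nat.card N :=
    Nat.card_congr (Subgroup.subgroupOfEquivOfLe le_sup_right).toEquiv
  have e5 : Nat.card (N.subgroupOf H) = Nat.card (H ⊓ N : Subgroup G) := by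
    rw [← Subgroup.inf_subgroupOf_right N H]
    have : Nat.card ((N ⊓ H).subgroupOf H) = Nat.card (N ⊓ H : Subgroup G) :=
      Nat.card_congr (Subgroup.subgroupOfEquivOfLe inf_le_right).toEquiv
    rw [this, inf_comm]
  rw [e1, e4, e2, e5, e3]
  ring

/-- Fiber-counting: if the fibers of `f` are contained in right cosets of `K`,
then `|H| ≤ |K| * |range f|`. -/
private lemma card_le_mul_fibers {H : Type*} [Group H] [Finite H] (K : Subgroup H)
    {β : Type*} (f : H → β) (hf : ∀ x y : H, f x = f y → x * y⁻¹ ∈ K) :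
    Nat.card H ≤ Nat.card K * Nat.card (Set.range f) := by
  classical
  haveI : Finite (Set.range f) := Set.finite_range f
  let σ : Set.range f → H := fun t => t.2.choose
  have hσ : ∀ t : Set.range f, f (σ t) = (t : β) := fun t => t.2.choose_spec
  let Φ : H → ↥K × ↥(Set.range f) := fun x =>
    (⟨x * (σ ⟨f x, ⟨x, rfl⟩⟩)⁻¹, by
        have : f x = f (σ ⟨f x, ⟨x, rfl⟩⟩) := (hσ ⟨f x, ⟨x, rfl⟩⟩).symm
        exact hf _ _ this⟩,
     ⟨f x, ⟨x, rfl⟩⟩)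
  have hinj : Function.Injective Φ := by
    intro a b hab
    have h2 : f a = f b := congrArg (fun p => ((p.2 : Set.range f) : β)) hab
    have harg : (⟨f a, ⟨a, rfl⟩⟩ : Set.range f) = ⟨f b, ⟨b, rfl⟩⟩ := Subtype.ext h2
    have h1 : a * (σ ⟨f a, ⟨a, rfl⟩⟩)⁻¹ = b * (σ ⟨f b, ⟨b, rfl⟩⟩)⁻¹ := by
      have := congrArg (fun p => ((p.1 : ↥K) : H)) hab
      simpa [Φ] using this
    rw [harg] at h1
    exact mul_right_cancel h1
  calc Nat.card H ≤ Nat.card (↥K × ↥(Set.range f)) := Nat.card_le_card_of_injective Φ hinj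
    _ = Nat.card K * Nat.card (Set.range f) := Nat.card_prod _ _

/-- Commutation extraction. -/
private lemma commute_of_commute_mul {x u y v : G} (h : Commute (x * u) (y * v))
    (hxy : Commute x y) (huv : Commute u v) (hyu : Commute y u) : Commute x v := by
  have h1 : x * u * (y * v) = y * v * (x * u) := h
  have h2 : x * u * (y * v) = y * (x * (u * v)) := by
    calc x * u * (y * v) = x * (u * y) * v := by group
      _ = x * (y * u) * v := by rw [hyu.symm.eq]
      _ = (x * y) * (u * v) := by group
      _ = (y * x) * (u * v) := by rw [hxy.eq]
      _ = y * (x * (u * v)) := by group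
  have h3 : y * v * (x * u) = y * (v * (x * u)) := by group
  have h4 : x * (u * v) = v * (x * u) := by
    have := h2.symm.trans (h1.trans h3)
    exact mul_left_cancel this
  have h5 : (x * v) * u = (v * x) * u := by
    calc (x * v) * u = x * (v * u) := by group
      _ = x * (u * v) := by rw [huv.eq]
      _ = v * (x * u) := h4
      _ = (v * x) * u := by group
  exact mul_right_cancel h5

/-- Structure of the normal closure: `ncl(Y) = Y ⊔ (G' ⊓ ncl(Y))`. -/
private lemma normalClosure_eq_sup (Y : Subgroup G) :
    Subgroup.normalClosure (Y : Set G) = Y ⊔ (commutator G ⊓ Subgroup.normalClosure (Y : Set G)) := by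
  haveI hKnorm : (commutator G).Normal := by rw [_root_.commutator_def]; infer_instance
  have hJnorm : (Y ⊔ (commutator G ⊓ Subgroup.normalClosure (Y : Set G))).Normal := by
    constructor
    intro n hn g
    have hmap : (Y ⊔ (commutator G ⊓ Subgroup.normalClosure (Y : Set G))).map
        (MulAut.conj g).toMonoidHom ≤ Y ⊔ (commutator G ⊓ Subgroup.normalClosure (Y : Set G)) := by
      rw [Subgroup.map_sup]
      refine sup_le ?_ ?_
      · rintro x ⟨y, hy, rfl⟩
        have hval : (MulAut.conj g).toMonoidHom y = g * y * g⁻¹ := rfl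
        rw [hval]
        have hw1 : y⁻¹ * (g * y * g⁻¹) ∈ commutator G := by
          have : y⁻¹ * (g * y * g⁻¹) = ⁅y⁻¹, g⁆ := by group
          rw [this, _root_.commutator_def]
          exact commutator_mem_commutator (mem_top _) (mem_top _)
        have hw2 : y⁻¹ * (g * y * g⁻¹) ∈ Subgroup.normalClosure (Y : Set G) := by
          have hy' : y ∈ Subgroup.normalClosure (Y : Set G) := le_normalClosure hy
          exact mul_mem (inv_mem hy') (Subgroup.normalClosure_normal.conj_mem _ hy' g)
        have : g * y * g⁻¹ = y * (y⁻¹ * (g * y * g⁻¹)) := by group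
        rw [this]
        exact mul_mem (le_sup_left (a := Y) hy)
          (le_sup_right (a := Y) (Subgroup.mem_inf.mpr ⟨hw1, hw2⟩))
      · rintro x ⟨z, hz, rfl⟩
        simp only [SetLike.mem_coe, Subgroup.mem_inf] at hz
        have hval : (MulAut.conj g).toMonoidHom z = g * z * g⁻¹ := rfl
        rw [hval]
        refine le_sup_right (a := Y) (Subgroup.mem_inf.mpr ⟨?_, ?_⟩)
        · exact hKnorm.conj_mem _ hz.1 g
        · exact Subgroup.normalClosure_normal.conj_mem _ hz.2 g
    exact hmap ⟨n, hn, rfl⟩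
  apply le_antisymm
  · haveI := hJnorm
    apply Subgroup.normalClosure_le_normal
    intro y hy
    exact le_sup_left (a := Y) hy
  · exact sup_le Subgroup.le_normalClosure inf_le_right


/-- The master induction: every normal subgroup `W` of a finite metabelian group
contains a `G`-normal abelian subgroup of maximal order among abelian subgroups of `W`. -/
private lemma gillam_master {G : Type*} [Group G] [Finite G]
    (hmeta : ∀ x ∈ commutator G, ∀ y ∈ commutator G, x * y = y * x) :
    ∀ (n : ℕ) (W : Subgroup G), W.Normal → Nat.card W ≤ n →
      ∃ X : Subgroup G, X.Normal ∧ (∀ x ∈ X, ∀ y ∈ X, x * y = y * x) ∧ X ≤ W ∧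
        ∀ A : Subgroup G, A ≤ W → (∀ x ∈ A, ∀ y ∈ A, x * y = y * x) →
          Nat.card A ≤ Nat.card X := by
  intro n
  induction n with
  | zero =>
    intro W _ h0
    have := Nat.card_pos (α := ↥W)
    omega
  | succ n ih =>
    intro W hW hWcard
    classical
    haveI := hW
    -- choose an abelian subgroup of W of maximal cardinality
    set fmax : Subgroup G → ℕ := fun A =>
      if A ≤ W ∧ (∀ x ∈ A, ∀ y ∈ A, x * y = y * x) then Nat.card A else 0 with hfmaxdef
    obtain ⟨B, hBtop⟩ := Finite.exists_max fmax
    have hbotcond : (⊥ : Subgroup G) ≤ W ∧ (∀ x ∈ (⊥ : Subgroup G), ∀ y ∈ (⊥ : Subgroup G),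
        x * y = y * x) := by
      refine ⟨bot_le, ?_⟩
      intro x hx y hy
      rw [Subgroup.mem_bot] at hx hy
      rw [hx, hy]
    have hfbot : fmax ⊥ = 1 := by
      rw [hfmaxdef]; simp only [if_pos hbotcond]; exact Subgroup.card_bot
    have hBpos : 1 ≤ fmax B := hfbot ▸ hBtop ⊥
    have hBcond : B ≤ W ∧ (∀ x ∈ B, ∀ y ∈ B, x * y = y * x) := by
      by_contra hcon
      rw [hfmaxdef] at hBpos; simp only [if_neg hcon] at hBpos; omega
    obtain ⟨hBW, hBab⟩ := hBcond
    have hfB : fmax B = Nat.card B := by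
      have hc : B ≤ W ∧ (∀ x ∈ B, ∀ y ∈ B, x * y = y * x) := ⟨hBW, hBab⟩
      rw [hfmaxdef]; simp only [if_pos hc]
    have hmax : ∀ A : Subgroup G, A ≤ W → (∀ x ∈ A, ∀ y ∈ A, x * y = y * x) →
        Nat.card A ≤ Nat.card B := by
      intro A hAW hAab
      have h1 : fmax A = Nat.card A := by
        have hc : A ≤ W ∧ (∀ x ∈ A, ∀ y ∈ A, x * y = y * x) := ⟨hAW, hAab⟩
        rw [hfmaxdef]; simp only [if_pos hc]
      rw [← h1, ← hfB]; exact hBtop A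
    by_cases hex : ∃ A : Subgroup G, A ≤ W ∧ (∀ x ∈ A, ∀ y ∈ A, x * y = y * x) ∧
        Nat.card A = Nat.card B ∧ Subgroup.normalClosure (A : Set G) ≠ W
    · -- descend to the proper normal closure
      obtain ⟨A, hAW, hAab, hAcard, hAncl⟩ := hex
      have hnclW : Subgroup.normalClosure (A : Set G) ≤ W :=
        Subgroup.normalClosure_le_normal (SetLike.coe_subset_coe.mpr hAW)
      have hle := Subgroup.card_le_of_le hnclW
      have hne : Nat.card (Subgroup.normalClosure (A : Set G)) ≠ Nat.card W := by
        intro heq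
        exact hAncl (sub_eq_of_le_of_card_le hnclW (le_of_eq heq.symm))
      have hcardn : Nat.card (Subgroup.normalClosure (A : Set G)) ≤ n := by omega
      obtain ⟨X, hXnorm, hXab, hXle, hXmax⟩ :=
        ih (Subgroup.normalClosure (A : Set G)) Subgroup.normalClosure_normal hcardn
      refine ⟨X, hXnorm, hXab, le_trans hXle hnclW, ?_⟩
      intro A' hA'W hA'ab
      calc Nat.card A' ≤ Nat.card B := hmax A' hA'W hA'ab
        _ = Nat.card A := hAcard.symm
        _ ≤ Nat.card X := hXmax A Subgroup.le_normalClosure hAab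
    · -- all maximal abelian subgroups have full normal closure; show B is normal
      push_neg at hex
      haveI hKnorm : (commutator G).Normal := by rw [_root_.commutator_def]; infer_instance
      set M : Subgroup G := commutator G ⊓ W with hMdef
      have hMnorm : M.Normal := by
        constructor
        intro m hm g
        rw [hMdef, Subgroup.mem_inf] at hm ⊢
        exact ⟨hKnorm.conj_mem _ hm.1 g, hW.conj_mem _ hm.2 g⟩
      have hMab : ∀ x ∈ M, ∀ y ∈ M, x * y = y * x := by
        intro x hx y hy
        rw [hMdef, Subgroup.mem_inf] at hx hy
        exact hmeta x hx.1 y hy.1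
      have hMW : M ≤ W := by rw [hMdef]; exact inf_le_right
      set V : Subgroup G := B ⊓ M with hVdef
      have hVB : V ≤ B := by rw [hVdef]; exact inf_le_left
      have hVM : V ≤ M := by rw [hVdef]; exact inf_le_right
      have hnclB : Subgroup.normalClosure (B : Set G) = W := hex B hBW hBab rfl
      have hWBM : W = B ⊔ M := by
        conv_lhs => rw [← hnclB]
        rw [normalClosure_eq_sup B, hnclB, ← hMdef]
      have hconjV : ∀ b ∈ B, ∀ v ∈ V, b⁻¹ * v * b = v := by
        intro b hb v hv
        have h := hBab b hb v (hVB hv)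
        calc b⁻¹ * v * b = b⁻¹ * (v * b) := by group
          _ = b⁻¹ * (b * v) := by rw [← h]
          _ = v := by group
      -- THE KEY CLAIM
      have key : ∀ g : G, ∀ b ∈ B, b⁻¹ * (g⁻¹ * b * g) ∈ V := by
        intro g
        set δ : G → G := fun x => x⁻¹ * (g⁻¹ * x * g) with hδdef
        have hδM : ∀ b ∈ B, δ b ∈ M := by
          intro b hb
          rw [hMdef, Subgroup.mem_inf]
          constructor
          · have h1 : δ b = ⁅b⁻¹, g⁻¹⁆ := by simp only [hδdef]; group
            rw [h1, _root_.commutator_def]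
            exact Subgroup.commutator_mem_commutator (Subgroup.mem_top _) (Subgroup.mem_top _)
          · have h1 : g⁻¹ * b * g ∈ W := by
              have h2 := hW.conj_mem b (hBW hb) g⁻¹
              simpa using h2
            have h3 : δ b = b⁻¹ * (g⁻¹ * b * g) := by simp only [hδdef]
            rw [h3]
            exact mul_mem (inv_mem (hBW hb)) h1
        have hcoc : ∀ x y : G, δ (x * y) = y⁻¹ * δ x * y * δ y := by
          intro x y; simp only [hδdef]; group
        -- the stabilizer subgroup St
        set St : Subgroup G :=
          { carrier := {x : G | x ∈ B ∧ δ x ∈ V}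
            one_mem' := by
              refine ⟨one_mem B, ?_⟩
              have h1 : δ 1 = 1 := by simp only [hδdef]; group
              rw [h1]; exact one_mem V
            mul_mem' := by
              rintro a b ⟨haB, haV⟩ ⟨hbB, hbV⟩
              refine ⟨mul_mem haB hbB, ?_⟩
              rw [hcoc a b]
              rw [hconjV b hbB (δ a) haV]
              exact mul_mem haV hbV
            inv_mem' := by
              rintro a ⟨haB, haV⟩
              refine ⟨inv_mem haB, ?_⟩
              have h1 : δ a⁻¹ = a * (δ a)⁻¹ * a⁻¹ := by simp only [hδdef]; group
              have h2 : a * (δ a)⁻¹ * a⁻¹ = (δ a)⁻¹ := by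
                have h3 := hconjV a⁻¹ (inv_mem haB) (δ a)⁻¹ (inv_mem haV)
                simpa using h3
              rw [h1, h2]
              exact inv_mem haV } with hStdef
        have hStmem : ∀ x : G, x ∈ St ↔ (x ∈ B ∧ δ x ∈ V) := by
          intro x; rw [hStdef]; exact Iff.rfl
        have hStB : St ≤ B := fun x hx => ((hStmem x).mp hx).1
        -- the subgroup Mg
        set Mg : Subgroup G := Subgroup.closure ((V : Set G) ∪ (δ '' (B : Set G))) with hMgdef
        have hMgM : Mg ≤ M := by
          rw [hMgdef]
          refine (Subgroup.closure_le _).mpr ?_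
          rintro x (hx | ⟨b, hb, rfl⟩)
          · exact hVM hx
          · exact hδM b hb
        have hVMg : V ≤ Mg := by
          intro v hv
          rw [hMgdef]
          exact Subgroup.subset_closure (Or.inl hv)
        have hδMg : ∀ b ∈ B, δ b ∈ Mg := by
          intro b hb
          rw [hMgdef]
          exact Subgroup.subset_closure (Or.inr ⟨b, hb, rfl⟩)
        -- St commutes with all δ-values
        have hcommSt : ∀ x, x ∈ St → ∀ b' ∈ B, Commute x (δ b') := by
          intro x hx b' hb'
          obtain ⟨hxB, hxV⟩ := (hStmem x).mp hx
          have hconj : Commute (g⁻¹ * x * g) (g⁻¹ * b' * g) := by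
            rw [commute_iff_eq]
            have h1 : (g⁻¹ * x * g) * (g⁻¹ * b' * g) = g⁻¹ * (x * b') * g := by group
            have h2 : (g⁻¹ * b' * g) * (g⁻¹ * x * g) = g⁻¹ * (b' * x) * g := by group
            rw [h1, h2, hBab x hxB b' hb']
          have hx' : g⁻¹ * x * g = x * δ x := by simp only [hδdef]; group
          have hb'' : g⁻¹ * b' * g = b' * δ b' := by simp only [hδdef]; group
          rw [hx', hb''] at hconj
          exact commute_of_commute_mul hconj
            ((commute_iff_eq _ _).mpr (hBab x hxB b' hb'))
            ((commute_iff_eq _ _).mpr (hMab _ (hδM x hxB) _ (hδM b' hb')))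
            ((commute_iff_eq _ _).mpr (hBab b' hb' (δ x) (hVB hxV)))
        -- St and Mg commute elementwise
        have hmut : ∀ a ∈ St, ∀ b ∈ Mg, Commute a b := by
          intro a ha b hb
          have hle : Mg ≤ Subgroup.centralizer {a} := by
            rw [hMgdef]
            refine (Subgroup.closure_le _).mpr ?_
            rintro z (hz | ⟨b', hb', rfl⟩)
            · rw [SetLike.mem_coe, Subgroup.mem_centralizer_iff]
              rintro w hw
              rcases hw with rfl
              exact hBab w (hStB ha) z (hVB hz)
            · rw [SetLike.mem_coe, Subgroup.mem_centralizer_iff]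
              rintro w hw
              rcases hw with rfl
              exact (hcommSt w ha b' hb').eq
          have h2 := hle hb
          rw [Subgroup.mem_centralizer_iff] at h2
          exact (commute_iff_eq _ _).mpr (h2 a rfl)
        -- Xg
        set Xg : Subgroup G := St ⊔ Mg with hXgdef
        have hXgW : Xg ≤ W := by
          rw [hXgdef]
          exact sup_le (le_trans hStB hBW) (le_trans hMgM hMW)
        have hXgab : ∀ x ∈ Xg, ∀ y ∈ Xg, x * y = y * x := by
          have hXgcl : Xg = Subgroup.closure ((St : Set G) ∪ (Mg : Set G)) := by
            rw [hXgdef, Subgroup.closure_union, Subgroup.closure_eq, Subgroup.closure_eq]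
          intro x hx y hy
          rw [hXgcl] at hx hy
          refine (closure_comm ?_ x hx y hy).eq
          rintro a (ha | ha) b (hb | hb)
          · exact (commute_iff_eq _ _).mpr (hBab a (hStB ha) b (hStB hb))
          · exact hmut a ha b hb
          · exact (hmut b hb a ha).symm
          · exact (commute_iff_eq _ _).mpr (hMab a (hMgM ha) b (hMgM hb))
        -- counting
        set T := (↥Mg ⧸ V.subgroupOf Mg) with hTdef
        set f : ↥B → T := fun b => QuotientGroup.mk ⟨δ (b : G), hδMg (b : G) b.2⟩ with hfdef
        have hfib : ∀ x y : ↥B, f x = f y → x * y⁻¹ ∈ St.subgroupOf B := by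
          intro x y hxy
          rw [hfdef] at hxy
          have h1 : ((⟨δ (x : G), hδMg _ x.2⟩ : ↥Mg))⁻¹ * ⟨δ (y : G), hδMg _ y.2⟩
              ∈ V.subgroupOf Mg := QuotientGroup.eq.mp hxy
          rw [Subgroup.mem_subgroupOf] at h1
          have h1' : (δ (x : G))⁻¹ * δ (y : G) ∈ V := by
            simpa using h1
          rw [Subgroup.mem_subgroupOf, hStmem]
          have hxyB : ((x * y⁻¹ : ↥B) : G) = (x : G) * (y : G)⁻¹ := by
            simp
          constructor
          · rw [hxyB]; exact mul_mem x.2 (inv_mem y.2)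
          · rw [hxyB]
            set c : G := (x : G) * (y : G)⁻¹ with hcdef
            have hxc : (x : G) = c * (y : G) := by rw [hcdef]; group
            have hd : δ (x : G) = (y : G)⁻¹ * δ c * (y : G) * δ (y : G) := by
              rw [hxc]; exact hcoc c (y : G)
            have hcom : Commute (δ (x : G)) (δ (y : G)) :=
              (commute_iff_eq _ _).mpr (hMab _ (hδM _ x.2) _ (hδM _ y.2))
            have h2 : δ (x : G) * (δ (y : G))⁻¹ ∈ V := by
              have h3 : (δ (y : G))⁻¹ * δ (x : G) ∈ V := by
                have h4 := inv_mem h1'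
                simpa [mul_inv_rev] using h4
              rwa [← hcom.inv_right.eq] at h3
            have h5 : (y : G)⁻¹ * δ c * (y : G) ∈ V := by
              have h6 : δ (x : G) * (δ (y : G))⁻¹ = (y : G)⁻¹ * δ c * (y : G) := by
                rw [hd]; group
              rwa [h6] at h2
            have h7 : δ c = ((y : G)⁻¹)⁻¹ * ((y : G)⁻¹ * δ c * (y : G)) * (y : G)⁻¹ := by
              group
            rw [h7]
            rw [hconjV ((y : G)⁻¹) (inv_mem y.2) _ h5]
            exact h5
        have hcount1 : Nat.card (↥B) ≤ Nat.card (St.subgroupOf B) * Nat.card (Set.range f) :=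
          card_le_mul_fibers (St.subgroupOf B) f hfib
        have hc2 : Nat.card (St.subgroupOf B) = Nat.card St :=
          Nat.card_congr (Subgroup.subgroupOfEquivOfLe hStB).toEquiv
        have hc3 : Nat.card (Set.range f) ≤ Nat.card T :=
          Nat.card_le_card_of_injective (fun t => (t : T)) Subtype.val_injective
        have hc4 : Nat.card (↥Mg) = Nat.card T * Nat.card (V.subgroupOf Mg) := by
          rw [hTdef]
          exact Subgroup.card_eq_card_quotient_mul_card_subgroup _
        have hc5 : Nat.card (V.subgroupOf Mg) = Nat.card V :=
          Nat.card_congr (Subgroup.subgroupOfEquivOfLe hVMg).toEquiv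
        have hi : Nat.card B * Nat.card V ≤ Nat.card St * Nat.card Mg := by
          have h8 : Nat.card (↥B) ≤ Nat.card St * Nat.card T := by
            calc Nat.card (↥B) ≤ Nat.card (St.subgroupOf B) * Nat.card (Set.range f) := hcount1
              _ = Nat.card St * Nat.card (Set.range f) := by rw [hc2]
              _ ≤ Nat.card St * Nat.card T := Nat.mul_le_mul_left _ hc3
          calc Nat.card B * Nat.card V ≤ (Nat.card St * Nat.card T) * Nat.card V :=
                Nat.mul_le_mul_right _ h8
            _ = Nat.card St * (Nat.card T * Nat.card V) := by ring
            _ = Nat.card St * Nat.card Mg := by rw [← hc5, ← hc4]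
        have hii := card_sup_mul_card_inf_comm St Mg (fun x hx y hy => (hmut x hx y hy).eq)
        have hiii : Nat.card (St ⊓ Mg : Subgroup G) ≤ Nat.card V := by
          refine Subgroup.card_le_of_le ?_
          rw [hVdef]
          exact inf_le_inf hStB hMgM
        have hXgcard_le : Nat.card Xg ≤ Nat.card B := hmax Xg hXgW hXgab
        have hVpos : 0 < Nat.card V := Nat.card_pos
        have hXgge : Nat.card B ≤ Nat.card Xg := by
          have h6 : Nat.card B * Nat.card V ≤ Nat.card Xg * Nat.card V := by
            calc Nat.card B * Nat.card V ≤ Nat.card St * Nat.card Mg := hi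
              _ = Nat.card Xg * Nat.card (St ⊓ Mg : Subgroup G) := by
                  rw [hXgdef]; exact hii.symm
              _ ≤ Nat.card Xg * Nat.card V := Nat.mul_le_mul_left _ hiii
          exact Nat.le_of_mul_le_mul_right h6 hVpos
        have hXgcard : Nat.card Xg = Nat.card B := le_antisymm hXgcard_le hXgge
        have hnclXg : Subgroup.normalClosure (Xg : Set G) = W := hex Xg hXgW hXgab hXgcard
        have hWXM : W = Xg ⊔ M := by
          conv_lhs => rw [← hnclXg]
          rw [normalClosure_eq_sup Xg, hnclXg, ← hMdef]
        have e1 : Nat.card W * Nat.card V = Nat.card B * Nat.card M := by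
          have h9 := card_sup_mul_card_inf_normal B M hMnorm
          rw [← hWBM, ← hVdef] at h9
          exact h9
        have e2 : Nat.card W * Nat.card (Xg ⊓ M : Subgroup G) = Nat.card Xg * Nat.card M := by
          have h9 := card_sup_mul_card_inf_normal Xg M hMnorm
          rw [← hWXM] at h9
          exact h9
        have hWpos : 0 < Nat.card W := Nat.card_pos
        have e3 : Nat.card (Xg ⊓ M : Subgroup G) = Nat.card V := by
          apply Nat.eq_of_mul_eq_mul_left hWpos
          rw [e2, hXgcard, e1]
        have hMgXM : Mg ≤ Xg ⊓ M := by
          refine le_inf ?_ hMgM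
          rw [hXgdef]
          exact le_sup_right
        have hMgV : Mg = V := by
          have hle : Nat.card Mg ≤ Nat.card V := by
            calc Nat.card Mg ≤ Nat.card (Xg ⊓ M : Subgroup G) := Subgroup.card_le_of_le hMgXM
              _ = Nat.card V := e3
          exact (sub_eq_of_le_of_card_le hVMg hle).symm
        intro b hb
        have h10 := hδMg b hb
        rw [hMgV] at h10
        have h11 : δ b = b⁻¹ * (g⁻¹ * b * g) := by simp only [hδdef]
        rwa [h11] at h10
      -- B is normal
      have hBnorm : B.Normal := by
        constructor
        intro b hb g
        have h1 := key g⁻¹ b hb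
        have h2 : g * b * g⁻¹ = b * (b⁻¹ * (g⁻¹⁻¹ * b * g⁻¹)) := by group
        rw [h2]
        exact mul_mem hb (hVB h1)
      exact ⟨B, hBnorm, hBab, hBW, hmax⟩

end GillamAux


/-- (Gillam / Mann, after Theorem `metalemma`.)  Let `G` be a finite metabelian group,
`N` a normal subgroup of `G`, and `B` an abelian subgroup of `N` of maximal order among
abelian subgroups of `N`.  Then `G` contains a normal abelian subgroup `C` contained in
the normal closure of `B` in `G` with `|C| = |B|`. -/
theorem exists_normal_abelian_subgroup_of_metabelian
    {G : Type*} [Group G] [Finite G]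
    (hmeta : ∀ x ∈ commutator G, ∀ y ∈ commutator G, x * y = y * x)
    (N : Subgroup G) (hN : N.Normal)
    (B : Subgroup G) (hBN : B ≤ N)
    (hBab : ∀ x ∈ B, ∀ y ∈ B, x * y = y * x)
    (hBmax : ∀ A : Subgroup G, A ≤ N → (∀ x ∈ A, ∀ y ∈ A, x * y = y * x) →
      Nat.card A ≤ Nat.card B) :
    ∃ C : Subgroup G, C.Normal ∧ (∀ x ∈ C, ∀ y ∈ C, x * y = y * x) ∧
      C ≤ Subgroup.normalClosure (B : Set G) ∧ Nat.card C = Nat.card B := by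
  classical
  haveI := hN
  obtain ⟨X, hXnorm, hXab, hXle, hXmax⟩ :=
    gillam_master hmeta (Nat.card (Subgroup.normalClosure (B : Set G)))
      (Subgroup.normalClosure (B : Set G)) Subgroup.normalClosure_normal le_rfl
  refine ⟨X, hXnorm, hXab, hXle, ?_⟩
  have h1 : Nat.card B ≤ Nat.card X := hXmax B Subgroup.le_normalClosure hBab
  have h2 : Nat.card X ≤ Nat.card B := by
    refine hBmax X ?_ hXab
    exact le_trans hXle (Subgroup.normalClosure_le_normal (SetLike.coe_subset_coe.mpr hBN))
  exact le_antisymm h2 h1
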